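/- Fix d,r,t∈ℕ and p∈[1,∞]. Let Φ=(φ^1,…,φ^r) with each φ^i∈W₀^1, let μ⃗=(μ^1,…,μ^t) be a vector of finite complex Borel measures on ℝ^d, and let X={x_j : j∈J} be separated with constant δ>0. Then for every ε>0 there exists γ>0 such that for every family Δ={δ_j}_{j∈J}⊂ℝ^d with sup_{j∈J}|δ_j| < γ and every C=(c^1,…,c^r)∈(ℓ^p(ℤ^d))^{(r)}, ∑_{l=1}^t ‖((f_C∗μ^l)(x_j) − (f_C∗μ^l)(x_j+δ_j))_{j∈J}‖_{ℓ^p(J)} ≤ ε‖C‖, where f_C = ∑_{k∈ℤ^d}∑_{i=1}^r c^i(k)φ^i(·−k); in other words, the sampling operators satisfy ‖U−U_Δ‖ → 0 as sup_j|δ_j| → 0. -/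

import Mathlib

open MeasureTheory ENNReal

noncomputable section

abbrev Euc (d : ℕ) := EuclideanSpace ℝ (Fin d)

/-- Embedding of `ℤ^d` into `ℝ^d`. -/
def zemb {d : ℕ} (k : Fin d → ℤ) : Euc d := WithLp.toLp 2 (fun i => (k i : ℝ))

/-- `ess sup_{x ∈ [0,1]^d} |f(x+k)|`, valued in `ℝ≥0∞`. -/
def cubeSup {d : ℕ} (f : Euc d → ℂ) (k : Fin d → ℤ) : ℝ≥0∞ :=
  essSup (fun x => (‖f (x + zemb k)‖₊ : ℝ≥0∞))
    (volume.restrict {x : Euc d | ∀ i, x i ∈ Set.Icc (0:ℝ) 1})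

/-- The Wiener amalgam norm `‖f‖_{W^p}`. -/
def WNorm {d : ℕ} (p : ℝ≥0∞) (f : Euc d → ℂ) : ℝ≥0∞ :=
  if p = ∞ then ⨆ k : Fin d → ℤ, cubeSup f k
  else (∑' k : Fin d → ℤ, cubeSup f k ^ p.toReal) ^ (1 / p.toReal)

/-- Membership in `W₀^1`: continuous with finite `W^1` norm. -/
def MemW01 {d : ℕ} (f : Euc d → ℂ) : Prop := Continuous f ∧ WNorm 1 f < ∞

/-- `(W^1)^{(r)}` norm of a vector of functions. -/
def WNormVec {d r : ℕ} (Φ : Fin r → Euc d → ℂ) : ℝ≥0∞ := ∑ i, WNorm 1 (Φ i)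

/-- the `ℓ^p` norm of a family of complex numbers, valued in `ℝ≥0∞`. -/
def lpNorm {ι : Type*} (p : ℝ≥0∞) (c : ι → ℂ) : ℝ≥0∞ :=
  if p = ∞ then ⨆ j, (‖c j‖₊ : ℝ≥0∞)
  else (∑' j, (‖c j‖₊ : ℝ≥0∞) ^ p.toReal) ^ (1 / p.toReal)

/-- The `(ℓ^p(ℤ^d))^{(r)}` norm `‖C‖ = ∑_i ‖c^i‖_{ℓ^p}`. -/
def vlpNorm {d r : ℕ} (p : ℝ≥0∞) (C : Fin r → (Fin d → ℤ) → ℂ) : ℝ≥0∞ :=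
  ∑ i, lpNorm p (C i)

/-- `f_C = ∑_{k ∈ ℤ^d} ∑_i c^i(k) φ^i(· - k)`. -/
def genFun {d r : ℕ} (Φ : Fin r → Euc d → ℂ) (C : Fin r → (Fin d → ℤ) → ℂ)
    (x : Euc d) : ℂ :=
  ∑' k : Fin d → ℤ, ∑ i, C i k * Φ i (x - zemb k)

/-- Integral of a complex-valued function against a finite complex Borel measure,
via the Jordan decompositions of the real and imaginary parts. -/
def cInt {d : ℕ} (μ : ComplexMeasure (Euc d)) (f : Euc d → ℂ) : ℂ :=
  ((∫ x, f x ∂(ComplexMeasure.re μ).toJordanDecomposition.posPart) -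
    (∫ x, f x ∂(ComplexMeasure.re μ).toJordanDecomposition.negPart)) +
  Complex.I * ((∫ x, f x ∂(ComplexMeasure.im μ).toJordanDecomposition.posPart) -
    (∫ x, f x ∂(ComplexMeasure.im μ).toJordanDecomposition.negPart))

/-- The convolution `(φ ∗ μ)(x) = ∫ φ(x - y) dμ(y)`. -/
def mconv {d : ℕ} (μ : ComplexMeasure (Euc d)) (φ : Euc d → ℂ) (x : Euc d) : ℂ :=
  cInt μ (fun y => φ (x - y))

/-- The total variation norm `|μ|(ℝ^d)` of a finite complex Borel measure, as the
supremum of `∑ ‖μ(S_i)‖` over finite disjoint families of measurable sets. -/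
def cmNorm {d : ℕ} (μ : ComplexMeasure (Euc d)) : ℝ≥0∞ :=
  ⨆ (n : ℕ) (S : Fin n → Set (Euc d)) (_ : ∀ i, MeasurableSet (S i))
    (_ : Pairwise (Function.onFun Disjoint S)), ∑ i, (‖μ (S i)‖₊ : ℝ≥0∞)

/-- norm of a vector of complex measures. -/
def cmNormVec {d t : ℕ} (μ : Fin t → ComplexMeasure (Euc d)) : ℝ≥0∞ :=
  ∑ l, cmNorm (μ l)

/-- The Riesz condition with explicit constants. -/
def RieszWith {d r : ℕ} (p : ℝ≥0∞) (Φ : Fin r → Euc d → ℂ) (m M : ℝ) : Prop :=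
  0 < m ∧ m ≤ M ∧ ∀ C : Fin r → (Fin d → ℤ) → ℂ, vlpNorm p C < ∞ →
    ENNReal.ofReal m * vlpNorm p C ≤ eLpNorm (genFun Φ C) p volume ∧
    eLpNorm (genFun Φ C) p volume ≤ ENNReal.ofReal M * vlpNorm p C

/-- The Riesz (unconditional basis) condition for `p`. -/
def RieszCond {d r : ℕ} (p : ℝ≥0∞) (Φ : Fin r → Euc d → ℂ) : Prop :=
  ∃ m M : ℝ, RieszWith p Φ m M

/-- `X` is a `μ⃗`-sampling set for `V^p(Φ)`. -/
def SamplingSet {d r t : ℕ} {J : Type*} (p : ℝ≥0∞) (Φ : Fin r → Euc d → ℂ)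
    (μ : Fin t → ComplexMeasure (Euc d)) (X : J → Euc d) : Prop :=
  ∃ A B : ℝ, 0 < A ∧ A ≤ B ∧ ∀ C : Fin r → (Fin d → ℤ) → ℂ, vlpNorm p C < ∞ →
    ENNReal.ofReal A * eLpNorm (genFun Φ C) p volume ≤
      ∑ l, lpNorm p (fun j => mconv (μ l) (genFun Φ C) (X j)) ∧
    ∑ l, lpNorm p (fun j => mconv (μ l) (genFun Φ C) (X j)) ≤
      ENNReal.ofReal B * eLpNorm (genFun Φ C) p volume

/-- `X` is separated with constant `δ`. -/
def SeparatedWith {d : ℕ} {J : Type*} (X : J → Euc d) (δ : ℝ) : Prop :=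
  ∀ i j : J, i ≠ j → δ ≤ dist (X i) (X j)

def SeparatedSet {d : ℕ} {J : Type*} (X : J → Euc d) : Prop :=
  ∃ δ : ℝ, 0 < δ ∧ SeparatedWith X δ

/-- Membership in `M_s(ℝ^d)`: `∫ (1+|x|)^s d|μ| < ∞`, expressed via the Jordan
decompositions of the real and imaginary parts. -/
def MemMs {d : ℕ} (s : ℝ) (μ : ComplexMeasure (Euc d)) : Prop :=
  (∫⁻ x, ENNReal.ofReal ((1 + ‖x‖) ^ s) ∂(ComplexMeasure.re μ).toJordanDecomposition.posPart < ∞) ∧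
  (∫⁻ x, ENNReal.ofReal ((1 + ‖x‖) ^ s) ∂(ComplexMeasure.re μ).toJordanDecomposition.negPart < ∞) ∧
  (∫⁻ x, ENNReal.ofReal ((1 + ‖x‖) ^ s) ∂(ComplexMeasure.im μ).toJordanDecomposition.posPart < ∞) ∧
  (∫⁻ x, ENNReal.ofReal ((1 + ‖x‖) ^ s) ∂(ComplexMeasure.im μ).toJordanDecomposition.negPart < ∞)

/-- `Φ ∈ W_s`: an `s`-localized Riesz generator. -/
def MemWs {d r : ℕ} (s : ℝ) (Φ : Fin r → Euc d → ℂ) : Prop :=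
  (∀ i, MemW01 (Φ i)) ∧ RieszCond 2 Φ ∧
    ∀ i, ∃ C0 : ℝ, 0 < C0 ∧ ∀ x : Euc d, ‖Φ i x‖ ≤ C0 * (1 + ‖x‖) ^ (-s)

end


set_option maxHeartbeats 1600000

section JJAux

open MeasureTheory ENNReal

noncomputable section

namespace JJ

variable {d : ℕ}

lemma zemb_add (m n : Fin d → ℤ) : zemb (m + n) = zemb m + zemb n := by
  ext i; simp [zemb]

lemma zemb_sub (m n : Fin d → ℤ) : zemb (m - n) = zemb m - zemb n := by
  ext i; simp [zemb]

def box (a b : ℝ) : Set (Euc d) := {x | ∀ i, x i ∈ Set.Icc a b}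

def bsup (a b : ℝ) (g : Euc d → ℝ≥0∞) (m : Fin d → ℤ) : ℝ≥0∞ :=
  ⨆ v ∈ (box a b : Set (Euc d)), g (v + zemb m)

def bsum (a b : ℝ) (g : Euc d → ℝ≥0∞) : ℝ≥0∞ := ∑' m : Fin d → ℤ, bsup a b g m

def flo (x : Euc d) : Fin d → ℤ := fun i => ⌊x i⌋

lemma measurable_flo : Measurable (flo (d := d)) := by
  unfold flo
  refine measurable_pi_iff.2 fun i => ?_
  exact Int.measurable_floor.comp ((continuous_apply i).comp (PiLp.continuous_ofLp 2 _)).measurable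

lemma mem_box01_fract (x : Euc d) : x - zemb (flo x) ∈ box (0:ℝ) 1 := by
  intro i
  have : (x - zemb (flo x)) i = x i - (⌊x i⌋ : ℝ) := rfl
  rw [this]
  constructor
  · linarith [Int.floor_le (x i)]
  · linarith [Int.lt_floor_add_one (x i)]

lemma g_le_bsup {a b : ℝ} {g : Euc d → ℝ≥0∞} {m : Fin d → ℤ} {v : Euc d}
    (hv : v ∈ (box a b : Set (Euc d))) : g (v + zemb m) ≤ bsup a b g m :=
  le_iSup₂ (f := fun v (_ : v ∈ (box a b : Set (Euc d))) => g (v + zemb m)) v hv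

lemma bsup_mono {a b a' b' : ℝ} (ha : a' ≤ a) (hb : b ≤ b') {g g' : Euc d → ℝ≥0∞}
    (hg : ∀ x, g x ≤ g' x) (m : Fin d → ℤ) : bsup a b g m ≤ bsup a' b' g' m := by
  refine iSup₂_le fun v hv => ?_
  refine le_trans (hg _) (g_le_bsup ?_)
  intro i; exact ⟨le_trans ha (hv i).1, le_trans (hv i).2 hb⟩

lemma bsum_mono {a b a' b' : ℝ} (ha : a' ≤ a) (hb : b ≤ b') {g g' : Euc d → ℝ≥0∞}
    (hg : ∀ x, g x ≤ g' x) : bsum a b g ≤ bsum a' b' g' :=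
  ENNReal.tsum_le_tsum fun m => bsup_mono ha hb hg m

lemma row_le (g : Euc d → ℝ≥0∞) (x : Euc d) :
    ∑' k : Fin d → ℤ, g (x - zemb k) ≤ bsum 0 1 g := by
  have h1 : ∀ k : Fin d → ℤ, g (x - zemb k) ≤ bsup 0 1 g (flo x - k) := by
    intro k
    have : x - zemb k = (x - zemb (flo x)) + zemb (flo x - k) := by
      rw [zemb_sub]; abel
    rw [this]
    exact g_le_bsup (mem_box01_fract x)
  refine le_trans (ENNReal.tsum_le_tsum h1) (le_of_eq ?_)
  exact (Equiv.subLeft (flo x)).tsum_eq (bsup 0 1 g)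

lemma bsup_cover {n₁ n₂ : ℤ} (hn : n₁ ≤ n₂) {a b : ℝ} (ha : (n₁:ℝ) ≤ a) (hb : b ≤ (n₂:ℝ) + 1)
    (g : Euc d → ℝ≥0∞) (m : Fin d → ℤ) :
    bsup a b g m ≤ ∑ s ∈ Finset.Icc (fun _ => n₁ : Fin d → ℤ) (fun _ => n₂), bsup 0 1 g (m + s) := by
  refine iSup₂_le fun v hv => ?_
  set s : Fin d → ℤ := fun i => min n₂ ⌊v i⌋ with hs
  have hsmem : s ∈ Finset.Icc (fun _ => n₁ : Fin d → ℤ) (fun _ => n₂) := by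
    rw [Finset.mem_Icc]
    constructor
    · intro i
      exact le_min hn (Int.le_floor.2 (le_trans ha (hv i).1))
    · intro i; exact min_le_left _ _
  have hw : v - zemb s ∈ (box (0:ℝ) 1 : Set (Euc d)) := by
    intro i
    have hvi : (v - zemb s) i = v i - (s i : ℝ) := rfl
    rw [hvi]
    rcases le_or_gt (⌊v i⌋) n₂ with h | h
    · have : s i = ⌊v i⌋ := min_eq_right h
      rw [this]
      constructor
      · linarith [Int.floor_le (v i)]
      · linarith [Int.lt_floor_add_one (v i)]
    · have : s i = n₂ := min_eq_left h.le
      rw [this]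
      have h2 : ((n₂:ℝ)) + 1 ≤ (⌊v i⌋ : ℝ) := by exact_mod_cast h
      constructor
      · linarith [Int.floor_le (v i)]
      · linarith [(hv i).2]
  have hrw : v + zemb m = (v - zemb s) + zemb (m + s) := by rw [zemb_add]; abel
  rw [hrw]
  exact le_trans (g_le_bsup hw) (Finset.single_le_sum
    (f := fun s => bsup 0 1 g (m + s)) (fun _ _ => zero_le) hsmem)

lemma bsum_cover {n₁ n₂ : ℤ} (hn : n₁ ≤ n₂) {a b : ℝ} (ha : (n₁:ℝ) ≤ a) (hb : b ≤ (n₂:ℝ) + 1)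
    (g : Euc d → ℝ≥0∞) :
    bsum a b g ≤ ((Finset.Icc (fun _ => n₁ : Fin d → ℤ) (fun _ => n₂)).card : ℝ≥0∞)
      * bsum 0 1 g := by
  calc bsum a b g ≤ ∑' m : Fin d → ℤ, ∑ s ∈ Finset.Icc (fun _ => n₁ : Fin d → ℤ) (fun _ => n₂),
        bsup 0 1 g (m + s) := ENNReal.tsum_le_tsum (bsup_cover hn ha hb g)
    _ = ∑ s ∈ Finset.Icc (fun _ => n₁ : Fin d → ℤ) (fun _ => n₂),
        ∑' m : Fin d → ℤ, bsup 0 1 g (m + s) := by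
        exact Summable.tsum_finsetSum fun i _ => ENNReal.summable
    _ = ∑ s ∈ Finset.Icc (fun _ => n₁ : Fin d → ℤ) (fun _ => n₂), bsum 0 1 g := by
        refine Finset.sum_congr rfl fun s _ => ?_
        exact (Equiv.addRight s).tsum_eq (bsup 0 1 g)
    _ = _ := by rw [Finset.sum_const, nsmul_eq_mul]

lemma coord_abs_le_norm (x : Euc d) (i : Fin d) : |x i| ≤ ‖x‖ := by
  rw [EuclideanSpace.norm_eq, ← Real.sqrt_sq_eq_abs]
  refine Real.sqrt_le_sqrt ?_
  have : x i ^ 2 = ‖x i‖ ^ 2 := by rw [Real.norm_eq_abs, sq_abs]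
  rw [this]
  exact Finset.single_le_sum (f := fun j => ‖x j‖ ^ 2) (fun j _ => sq_nonneg _)
    (Finset.mem_univ i)

lemma norm_le_of_coords {M : ℝ} (hM : 0 ≤ M) (x : Euc d) (hx : ∀ i, |x i| ≤ M) :
    ‖x‖ ≤ M * Real.sqrt d := by
  rw [EuclideanSpace.norm_eq]
  have h1 : ∑ i, ‖x i‖ ^ 2 ≤ ∑ _i : Fin d, M ^ 2 := by
    refine Finset.sum_le_sum fun i _ => ?_
    have := hx i
    rw [Real.norm_eq_abs]
    nlinarith [abs_nonneg (x i)]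
  refine le_trans (Real.sqrt_le_sqrt h1) ?_
  rw [Finset.sum_const, Finset.card_univ, Fintype.card_fin, nsmul_eq_mul]
  rw [Real.sqrt_mul (by positivity), Real.sqrt_sq hM]
  ring_nf
  exact le_refl _

lemma vol_pos_inter {U : Set (Euc d)} (hU : IsOpen U) {x₀ : Euc d} (hx₀U : x₀ ∈ U)
    (hx₀ : x₀ ∈ (box (0:ℝ) 1 : Set (Euc d))) : 0 < volume (U ∩ box 0 1) := by
  set Qo : Set (Euc d) := {x | ∀ i, x i ∈ Set.Ioo (0:ℝ) 1} with hQo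
  have hQoOpen : IsOpen Qo := by
    have : Qo = ⋂ i, (fun x : Euc d => x i) ⁻¹' Set.Ioo (0:ℝ) 1 := by
      ext x; simp [hQo]
    rw [this]
    exact isOpen_iInter_of_finite fun i => isOpen_Ioo.preimage ((continuous_apply i).comp (PiLp.continuous_ofLp 2 _))
  have hQosub : Qo ⊆ box 0 1 := fun x hx i => ⟨(hx i).1.le, (hx i).2.le⟩
  set c : Euc d := WithLp.toLp 2 (fun _ => (1:ℝ)/2) with hc
  set seq : ℕ → Euc d := fun n => x₀ + ((1:ℝ)/(n+1)) • (c - x₀) with hseq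
  have hmem : ∀ n, seq n ∈ Qo := by
    intro n i
    have ht0 : 0 < (1:ℝ)/(n+1) := by positivity
    have ht1 : (1:ℝ)/(n+1) ≤ 1 := by
      rw [div_le_one (by positivity)]; norm_num
    have hco : seq n i = x₀ i + ((1:ℝ)/(n+1)) * ((1:ℝ)/2 - x₀ i) := rfl
    have h0 := (hx₀ i).1
    have h1 := (hx₀ i).2
    rw [hco]
    constructor
    · nlinarith
    · nlinarith
  have htend : Filter.Tendsto seq Filter.atTop (nhds x₀) := by
    have h0 : Filter.Tendsto (fun n : ℕ => (1:ℝ)/(n+1)) Filter.atTop (nhds 0) :=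
      tendsto_one_div_add_atTop_nhds_zero_nat
    have := (h0.smul_const (c - x₀)).const_add x₀
    simpa [seq, one_div] using this
  have hne : (U ∩ Qo).Nonempty := by
    have := htend.eventually (hU.mem_nhds hx₀U)
    obtain ⟨n, hn⟩ := this.exists
    exact ⟨seq n, hn, hmem n⟩
  have : 0 < volume (U ∩ Qo) := (hU.inter hQoOpen).measure_pos volume hne
  exact lt_of_lt_of_le this (measure_mono (Set.inter_subset_inter_right _ hQosub))

lemma le_essSup_box (h : Euc d → ℝ≥0∞) (hc : Continuous h) {x₀ : Euc d}
    (hx : x₀ ∈ (box (0:ℝ) 1 : Set (Euc d))) :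
    h x₀ ≤ essSup h (volume.restrict (box 0 1)) := by
  by_contra hlt
  push_neg at hlt
  set E := essSup h (volume.restrict (box (0:ℝ) 1 : Set (Euc d))) with hE
  set U : Set (Euc d) := h ⁻¹' Set.Ioi E with hU
  have hUopen : IsOpen U := isOpen_Ioi.preimage hc
  have hx₀U : x₀ ∈ U := hlt
  have h0 : (volume.restrict (box (0:ℝ) 1 : Set (Euc d))) U = 0 := by
    have hae := ae_le_essSup (μ := volume.restrict (box (0:ℝ) 1 : Set (Euc d))) h
    rw [Filter.eventually_iff, mem_ae_iff] at hae
    have : {y : Euc d | h y ≤ E}ᶜ = U := by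
      ext y; simp [hU, not_le]
    rwa [this] at hae
  rw [Measure.restrict_apply hUopen.measurableSet] at h0
  exact absurd h0 (vol_pos_inter hUopen hx₀U hx).ne'

lemma bsum01_le_WNorm (f : Euc d → ℂ) (hf : Continuous f) :
    bsum 0 1 (fun x => (‖f x‖₊ : ℝ≥0∞)) ≤ WNorm 1 f := by
  have h1 : ∀ m, bsup 0 1 (fun x => (‖f x‖₊ : ℝ≥0∞)) m ≤ cubeSup f m := by
    intro m
    refine iSup₂_le fun v hv => ?_
    exact le_essSup_box (fun x => (‖f (x + zemb m)‖₊ : ℝ≥0∞))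
      (ENNReal.continuous_coe.comp ((hf.comp (continuous_id.add continuous_const)).nnnorm)) hv
  refine le_trans (ENNReal.tsum_le_tsum h1) (le_of_eq ?_)
  simp [WNorm]

section counting

variable {J : Type} {X : J → Euc d}

lemma count_bound {δ₀ : ℝ} (hδ : 0 < δ₀) (hsep : SeparatedWith X δ₀) :
    ∃ N : ℕ, ∀ (m : Fin d → ℤ) (s : Finset J), (∀ j ∈ s, flo (X j) = m) → s.card ≤ N := by
  classical
  rcases Nat.eq_zero_or_pos d with hd | hd
  · refine ⟨1, fun m s _ => ?_⟩
    refine Finset.card_le_one.2 fun a ha b hb => ?_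
    by_contra hab
    have h1 := hsep a b hab
    have h2 : X a = X b := by
      subst hd; exact Subsingleton.elim _ _
    rw [h2, dist_self] at h1
    linarith
  haveI : Nonempty (Fin d) := ⟨⟨0, hd⟩⟩
  set R : ℝ := Real.sqrt d + δ₀ with hR
  have hRpos : 0 < R := by positivity
  refine ⟨⌈(R/(δ₀/2))^d⌉₊, fun m s hs => ?_⟩
  set κ : ℝ≥0∞ := ENNReal.ofReal (Real.sqrt Real.pi ^ (Fintype.card (Fin d)) /
    Real.Gamma ((Fintype.card (Fin d) : ℝ) / 2 + 1)) with hκ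
  have hball : ∀ (x : Euc d) (r : ℝ),
      volume (Metric.ball x r) = ENNReal.ofReal r ^ d * κ := by
    intro x r
    rw [EuclideanSpace.volume_ball (Fin d) x r, hκ, Fintype.card_fin]
  have hκ0 : κ ≠ 0 := by
    rw [hκ, Ne, ENNReal.ofReal_eq_zero, not_le]
    have h1 : 0 < Real.Gamma ((Fintype.card (Fin d) : ℝ)/2 + 1) :=
      Real.Gamma_pos_of_pos (by positivity)
    have h2 : 0 < Real.sqrt Real.pi ^ (Fintype.card (Fin d)) := by
      have := Real.pi_pos
      positivity
    positivity
  have hκtop : κ ≠ ∞ := ENNReal.ofReal_ne_top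
  have hdisj : ∀ i ∈ s, ∀ j ∈ s, i ≠ j →
      Disjoint (Metric.ball (X i) (δ₀/2)) (Metric.ball (X j) (δ₀/2)) := by
    intro i _ j _ hij
    refine Metric.ball_disjoint_ball ?_
    have := hsep i j hij
    linarith
  have hsubs : ∀ j ∈ s, Metric.ball (X j) (δ₀/2) ⊆ Metric.ball (zemb m) R := by
    intro j hj z hz
    rw [Metric.mem_ball] at hz ⊢
    have hdXj : dist (X j) (zemb m) ≤ Real.sqrt d := by
      rw [dist_eq_norm]
      have hmem : X j - zemb m ∈ (box (0:ℝ) 1 : Set (Euc d)) := by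
        rw [← hs j hj]; exact mem_box01_fract (X j)
      have := norm_le_of_coords (M := 1) one_pos.le (X j - zemb m) (fun i => by
        have := hmem i
        rw [abs_le]
        constructor
        · linarith [this.1]
        · linarith [this.2])
      simpa using this
    calc dist z (zemb m) ≤ dist z (X j) + dist (X j) (zemb m) := dist_triangle _ _ _
      _ < δ₀/2 + Real.sqrt d := by linarith
      _ ≤ R := by rw [hR]; linarith
  have hm : ((s.card : ℝ≥0∞) * ENNReal.ofReal (δ₀/2) ^ d) * κ ≤ ENNReal.ofReal R ^ d * κ := by
    calc ((s.card : ℝ≥0∞) * ENNReal.ofReal (δ₀/2) ^ d) * κ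
        = ∑ j ∈ s, volume (Metric.ball (X j) (δ₀/2)) := by
          simp [hball, Finset.sum_const, nsmul_eq_mul, mul_assoc]
      _ = volume (⋃ j ∈ s, Metric.ball (X j) (δ₀/2)) :=
          (measure_biUnion_finset (fun i hi j hj hij => hdisj i hi j hj hij)
            (fun j _ => measurableSet_ball)).symm
      _ ≤ volume (Metric.ball (zemb m) R) := measure_mono (Set.iUnion₂_subset hsubs)
      _ = ENNReal.ofReal R ^ d * κ := hball _ _
  rw [ENNReal.mul_le_mul_iff_left hκ0 hκtop] at hm
  have hd2 : (0:ℝ) < (δ₀/2)^d := by positivity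
  have hm2 : (s.card : ℝ≥0∞) * ENNReal.ofReal ((δ₀/2) ^ d) ≤ ENNReal.ofReal (R ^ d) := by
    rwa [← ENNReal.ofReal_pow (by positivity), ← ENNReal.ofReal_pow hRpos.le] at hm
  have hm3 : (s.card : ℝ≥0∞) ≤ ENNReal.ofReal ((R/(δ₀/2))^d) := by
    rw [div_pow, ENNReal.ofReal_div_of_pos hd2]
    rw [ENNReal.le_div_iff_mul_le (Or.inl (by simp [ENNReal.ofReal_eq_zero, not_le, hd2]))
      (Or.inl ENNReal.ofReal_ne_top)]
    exact hm2
  have hm4 : (s.card : ℝ) ≤ (R/(δ₀/2))^d := by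
    have := ENNReal.toReal_mono ENNReal.ofReal_ne_top hm3
    simpa [ENNReal.toReal_ofReal (show (0:ℝ) ≤ (R/(δ₀/2))^d by positivity)] using this
  exact_mod_cast hm4.trans (Nat.le_ceil _)

lemma col_le [Countable J] {N : ℕ}
    (hN : ∀ (m : Fin d → ℤ) (s : Finset J), (∀ j ∈ s, flo (X j) = m) → s.card ≤ N)
    (g : Euc d → ℝ≥0∞) (k : Fin d → ℤ) :
    ∑' j : J, g (X j - zemb k) ≤ (N : ℝ≥0∞) * bsum 0 1 g := by
  classical
  have hfin : ∀ m : Fin d → ℤ, {j | flo (X j) = m}.Finite := by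
    intro m
    by_contra h
    have hinf : {j | flo (X j) = m}.Infinite := h
    obtain ⟨s, hsub, hcard⟩ := hinf.exists_subset_card_eq (N+1)
    have := hN m s (fun j hj => hsub hj)
    omega
  have hdecomp : ∑' j : J, g (X j - zemb k)
      = ∑' m : Fin d → ℤ, ∑' j : {j // flo (X j) = m}, g (X j.val - zemb k) := by
    rw [← (Equiv.sigmaFiberEquiv (fun j => flo (X j))).tsum_eq
      (fun j => g (X j - zemb k))]
    exact ENNReal.tsum_sigma' _
  rw [hdecomp]
  have hinner : ∀ m : Fin d → ℤ, ∑' j : {j // flo (X j) = m}, g (X j.val - zemb k)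
      ≤ (N : ℝ≥0∞) * bsup 0 1 g (m - k) := by
    intro m
    haveI : Fintype {j // flo (X j) = m} := (hfin m).fintype
    have hterm : ∀ j : {j // flo (X j) = m}, g (X j.val - zemb k) ≤ bsup 0 1 g (m - k) := by
      intro j
      have h1 : X j.val - zemb k = (X j.val - zemb (flo (X j.val))) + zemb (m - k) := by
        rw [zemb_sub, j.2]; abel
      rw [h1]
      exact g_le_bsup (mem_box01_fract (X j.val))
    calc ∑' j : {j // flo (X j) = m}, g (X j.val - zemb k)
        = ∑ j : {j // flo (X j) = m}, g (X j.val - zemb k) := tsum_fintype _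
      _ ≤ ∑ _j : {j // flo (X j) = m}, bsup 0 1 g (m - k) :=
          Finset.sum_le_sum fun j _ => hterm j
      _ = (Fintype.card {j // flo (X j) = m} : ℝ≥0∞) * bsup 0 1 g (m - k) := by
          rw [Finset.sum_const, Finset.card_univ, nsmul_eq_mul]
      _ ≤ (N : ℝ≥0∞) * bsup 0 1 g (m - k) := by
          refine mul_le_mul_left ?_ _
          have hcard : Fintype.card {j // flo (X j) = m} ≤ N := by
            have h2 := hN m (Finset.univ.image (fun j : {j // flo (X j) = m} => j.val))
              (fun j hj => by
                obtain ⟨j', _, rfl⟩ := Finset.mem_image.mp hj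
                exact j'.2)
            rwa [Finset.card_image_of_injective _ Subtype.val_injective,
              Finset.card_univ] at h2
          exact_mod_cast hcard
  calc ∑' m : Fin d → ℤ, ∑' j : {j // flo (X j) = m}, g (X j.val - zemb k)
      ≤ ∑' m : Fin d → ℤ, (N : ℝ≥0∞) * bsup 0 1 g (m - k) := ENNReal.tsum_le_tsum hinner
    _ = (N : ℝ≥0∞) * ∑' m : Fin d → ℤ, bsup 0 1 g (m - k) := ENNReal.tsum_mul_left
    _ = (N : ℝ≥0∞) * bsum 0 1 g := by
        congr 1
        exact (Equiv.subRight k).tsum_eq (bsup 0 1 g)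

end counting

def elp {ι : Type*} (p : ℝ≥0∞) (b : ι → ℝ≥0∞) : ℝ≥0∞ :=
  if p = ∞ then ⨆ j, b j else (∑' j, b j ^ p.toReal) ^ (1 / p.toReal)

lemma elp_mono {ι : Type*} (p : ℝ≥0∞) {b b' : ι → ℝ≥0∞} (h : ∀ j, b j ≤ b' j) :
    elp p b ≤ elp p b' := by
  unfold elp
  split_ifs
  · exact iSup_mono h
  · exact ENNReal.rpow_le_rpow
      (ENNReal.tsum_le_tsum fun j => ENNReal.rpow_le_rpow (h j) ENNReal.toReal_nonneg)
      (by positivity)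

lemma one_le_toReal {p : ℝ≥0∞} (hp : 1 ≤ p) (hptop : p ≠ ∞) : 1 ≤ p.toReal := by
  have := ENNReal.toReal_mono hptop hp
  simpa using this

theorem schur {ι κ : Type*} [Countable ι] [Countable κ] {p : ℝ≥0∞} (hp : 1 ≤ p)
    (K : ι → κ → ℝ≥0∞) (a : κ → ℝ≥0∞) (R : ℝ≥0∞)
    (hrow : ∀ j, ∑' k, K j k ≤ R) (hcol : ∀ k, ∑' j, K j k ≤ R) :
    elp p (fun j => ∑' k, a k * K j k) ≤ R * elp p a := by
  classical
  by_cases hptop : p = ∞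
  · subst hptop
    simp only [elp, if_pos rfl]
    refine iSup_le fun j => ?_
    calc ∑' k, a k * K j k ≤ ∑' k, (⨆ k', a k') * K j k :=
          ENNReal.tsum_le_tsum fun k => mul_le_mul_left (le_iSup a k) _
      _ = (⨆ k', a k') * ∑' k, K j k := ENNReal.tsum_mul_left
      _ ≤ (⨆ k', a k') * R := mul_le_mul_right (hrow j) _
      _ = R * ⨆ k', a k' := mul_comm _ _
  set pt := p.toReal with hpt
  have hpt1 : 1 ≤ pt := one_le_toReal hp hptop
  have hpt0 : 0 < pt := lt_of_lt_of_le one_pos hpt1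
  simp only [elp, if_neg hptop]
  rcases eq_or_lt_of_le hpt1 with hpt_eq | hpt_lt
  · have hpt_eq' : p.toReal = 1 := hpt_eq.symm
    rw [hpt_eq']
    simp only [ENNReal.rpow_one, one_div_one]
    calc ∑' j, ∑' k, a k * K j k = ∑' k, ∑' j, a k * K j k := ENNReal.tsum_comm
      _ = ∑' k, a k * ∑' j, K j k := by
          refine tsum_congr fun k => ?_
          exact ENNReal.tsum_mul_left
      _ ≤ ∑' k, a k * R := ENNReal.tsum_le_tsum fun k => mul_le_mul_right (hcol k) _
      _ = R * ∑' k, a k := by rw [← ENNReal.tsum_mul_left]; exact tsum_congr fun k => mul_comm _ _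
  · set qt := pt / (pt - 1) with hqt
    have hconj : Real.HolderConjugate pt qt := Real.HolderConjugate.conjExponent hpt_lt
    have hq0 : 0 < qt := hconj.symm.pos
    have hinv : 1/pt + 1/qt = 1 := by
      have := hconj.inv_add_inv_eq_one
      simpa [one_div] using this
    letI : MeasurableSpace κ := ⊤
    haveI : MeasurableSingletonClass κ := ⟨fun _ => trivial⟩
    have hhold : ∀ j, (∑' k, a k * K j k) ≤
        (∑' k, a k ^ pt * K j k) ^ (1/pt) * (∑' k, K j k) ^ (1/qt) := by
      intro j
      have h1 : ∀ k, a k * K j k = (a k * K j k ^ (1/pt)) * K j k ^ (1/qt) := by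
        intro k
        rw [mul_assoc, ← ENNReal.rpow_add_of_nonneg (1/pt) (1/qt) (by positivity) (by positivity),
          hinv, ENNReal.rpow_one]
      calc ∑' k, a k * K j k = ∑' k, (a k * K j k ^ (1/pt)) * K j k ^ (1/qt) := tsum_congr h1
        _ = ∫⁻ k, (a k * K j k ^ (1/pt)) * K j k ^ (1/qt) ∂Measure.count :=
            (lintegral_count _).symm
        _ ≤ (∫⁻ k, (a k * K j k ^ (1/pt)) ^ pt ∂Measure.count) ^ (1/pt) *
            (∫⁻ k, (K j k ^ (1/qt)) ^ qt ∂Measure.count) ^ (1/qt) :=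
            ENNReal.lintegral_mul_le_Lp_mul_Lq _ hconj
              (measurable_of_countable _).aemeasurable (measurable_of_countable _).aemeasurable
        _ = (∑' k, (a k * K j k ^ (1/pt)) ^ pt) ^ (1/pt) *
            (∑' k, (K j k ^ (1/qt)) ^ qt) ^ (1/qt) := by rw [lintegral_count, lintegral_count]
        _ = (∑' k, a k ^ pt * K j k) ^ (1/pt) * (∑' k, K j k) ^ (1/qt) := by
            congr 1
            · congr 1
              refine tsum_congr fun k => ?_
              rw [ENNReal.mul_rpow_of_nonneg _ _ hpt0.le, ← ENNReal.rpow_mul,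
                one_div_mul_cancel hpt0.ne', ENNReal.rpow_one]
            · congr 1
              refine tsum_congr fun k => ?_
              rw [← ENNReal.rpow_mul, one_div_mul_cancel hq0.ne', ENNReal.rpow_one]
    have hmain : ∑' j, (∑' k, a k * K j k) ^ pt ≤ R ^ (pt/qt) * (R * ∑' k, a k ^ pt) := by
      calc ∑' j, (∑' k, a k * K j k) ^ pt
          ≤ ∑' j, ((∑' k, a k ^ pt * K j k) ^ (1/pt) * (∑' k, K j k) ^ (1/qt)) ^ pt :=
            ENNReal.tsum_le_tsum fun j => ENNReal.rpow_le_rpow (hhold j) hpt0.le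
        _ ≤ ∑' j, ((∑' k, a k ^ pt * K j k) ^ (1/pt) * R ^ (1/qt)) ^ pt := by
            refine ENNReal.tsum_le_tsum fun j => ENNReal.rpow_le_rpow ?_ hpt0.le
            exact mul_le_mul_right (ENNReal.rpow_le_rpow (hrow j) (by positivity)) _
        _ = ∑' j, (∑' k, a k ^ pt * K j k) * R ^ (pt/qt) := by
            refine tsum_congr fun j => ?_
            rw [ENNReal.mul_rpow_of_nonneg _ _ hpt0.le, ← ENNReal.rpow_mul,
              ← ENNReal.rpow_mul, one_div_mul_cancel hpt0.ne', ENNReal.rpow_one,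
              one_div, inv_mul_eq_div]
        _ = (∑' j, ∑' k, a k ^ pt * K j k) * R ^ (pt/qt) := ENNReal.tsum_mul_right
        _ = (∑' k, a k ^ pt * ∑' j, K j k) * R ^ (pt/qt) := by
            rw [ENNReal.tsum_comm (f := fun j k => a k ^ pt * K j k)]
            congr 1
            exact tsum_congr fun k => ENNReal.tsum_mul_left
        _ ≤ (∑' k, a k ^ pt * R) * R ^ (pt/qt) :=
            mul_le_mul_left (ENNReal.tsum_le_tsum fun k => mul_le_mul_right (hcol k) _) _
        _ = R ^ (pt/qt) * (R * ∑' k, a k ^ pt) := by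
            rw [ENNReal.tsum_mul_right]
            ring
    calc (∑' j, (∑' k, a k * K j k) ^ pt) ^ (1/pt)
        ≤ (R ^ (pt/qt) * (R * ∑' k, a k ^ pt)) ^ (1/pt) :=
          ENNReal.rpow_le_rpow hmain (by positivity)
      _ = R ^ (1/qt) * (R ^ (1/pt) * (∑' k, a k ^ pt) ^ (1/pt)) := by
          rw [ENNReal.mul_rpow_of_nonneg _ _ (by positivity),
            ENNReal.mul_rpow_of_nonneg _ _ (by positivity), ← ENNReal.rpow_mul]
          congr 2
          field_simp
      _ = (R ^ (1/qt) * R ^ (1/pt)) * (∑' k, a k ^ pt) ^ (1/pt) := by ring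
      _ = R * (∑' k, a k ^ pt) ^ (1/pt) := by
          rw [← ENNReal.rpow_add_of_nonneg _ _ (by positivity) (by positivity)]
          rw [show 1/qt + 1/pt = 1 by linarith [hinv], ENNReal.rpow_one]

lemma rpow_sum_le {ι : Type*} (s : Finset ι) (f : ι → ℝ≥0∞) {t : ℝ} (h0 : 0 < t) (h1 : t ≤ 1) :
    (∑ i ∈ s, f i) ^ t ≤ ∑ i ∈ s, f i ^ t := by
  classical
  induction s using Finset.induction with
  | empty => simp [ENNReal.zero_rpow_of_pos h0]
  | insert x s' hx ih =>
    rw [Finset.sum_insert hx, Finset.sum_insert hx]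
    exact le_trans (ENNReal.rpow_add_le_add_rpow _ _ h0.le h1) (add_le_add_right ih _)

lemma elp_prod_le {r : ℕ} {κ : Type*} {p : ℝ≥0∞} (hp : 1 ≤ p) (a : Fin r × κ → ℝ≥0∞) :
    elp p a ≤ ∑ i, elp p (fun k => a (i, k)) := by
  unfold elp
  split_ifs with h
  · rw [iSup_prod]
    exact iSup_le fun i => Finset.single_le_sum (f := fun i => ⨆ k, a (i, k))
      (fun _ _ => zero_le) (Finset.mem_univ i)
  · have hpt1 : 1 ≤ p.toReal := one_le_toReal hp h
    have hpt0 : 0 < p.toReal := lt_of_lt_of_le one_pos hpt1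
    have h1 : ∑' ik : Fin r × κ, a ik ^ p.toReal = ∑ i, ∑' k, a (i,k) ^ p.toReal := by
      have h2 : ∑' ik : Fin r × κ, a ik ^ p.toReal
          = ∑' i, ∑' k, a (i,k) ^ p.toReal := by
        rw [← ENNReal.tsum_prod (f := fun i k => a (i,k) ^ p.toReal)]
      rw [h2]
      exact tsum_fintype _
    rw [h1]
    refine le_trans (rpow_sum_le _ _ (by positivity) ?_) ?_
    · rw [div_le_one hpt0]; linarith
    · exact le_refl _

def oscE (φ : Euc d → ℂ) (γ : ℝ) (z : Euc d) : ℝ≥0∞ :=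
  ⨆ u ∈ Metric.closedBall (0 : Euc d) γ, (‖φ (z + u) - φ z‖₊ : ℝ≥0∞)

lemma oscE_le {φ : Euc d → ℂ} {γ : ℝ} {z u : Euc d} (hu : ‖u‖ ≤ γ) :
    (‖φ (z + u) - φ z‖₊ : ℝ≥0∞) ≤ oscE φ γ z := by
  refine le_iSup₂ (f := fun u (_ : u ∈ Metric.closedBall (0:Euc d) γ) =>
    (‖φ (z + u) - φ z‖₊ : ℝ≥0∞)) u ?_
  rwa [Metric.mem_closedBall, dist_zero_right]

lemma oscE_mono (φ : Euc d → ℂ) {γ γ' : ℝ} (h : γ ≤ γ') (z : Euc d) :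
    oscE φ γ z ≤ oscE φ γ' z := by
  refine iSup₂_le fun u hu => ?_
  rw [Metric.mem_closedBall, dist_zero_right] at hu
  exact oscE_le (le_trans hu h)

lemma measurable_oscE (φ : Euc d → ℂ) (hφ : Continuous φ) (γ : ℝ) :
    Measurable (oscE φ γ) := by
  have h : LowerSemicontinuous (oscE φ γ) := by
    refine lowerSemicontinuous_iSup fun u => lowerSemicontinuous_iSup fun hu => ?_
    exact (ENNReal.continuous_coe.comp
      ((hφ.comp (continuous_id.add continuous_const)).sub hφ).nnnorm).lowerSemicontinuous
  exact h.measurable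

lemma bsup_oscE_le {φ : Euc d → ℂ} {γ : ℝ} (hγ : γ ≤ 1) (m : Fin d → ℤ) :
    bsup (-1) 1 (oscE φ γ) m ≤ 2 * bsup (-2) 2 (fun x => (‖φ x‖₊ : ℝ≥0∞)) m := by
  refine iSup₂_le fun v hv => ?_
  refine iSup₂_le fun u hu => ?_
  rw [Metric.mem_closedBall, dist_zero_right] at hu
  rw [show v + zemb m + u = (v + u) + zemb m from by abel]
  have h1 : (‖φ ((v + u) + zemb m) - φ (v + zemb m)‖₊ : ℝ≥0∞)
      ≤ (‖φ ((v + u) + zemb m)‖₊ : ℝ≥0∞) + (‖φ (v + zemb m)‖₊ : ℝ≥0∞) := by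
    exact_mod_cast nnnorm_sub_le (φ ((v + u) + zemb m)) (φ (v + zemb m))
  have hvu : v + u ∈ (box (-2:ℝ) 2 : Set (Euc d)) := by
    intro i
    have h3 := coord_abs_le_norm u i
    have h4 := (hv i)
    have h5 : |u i| ≤ 1 := le_trans h3 (le_trans hu hγ)
    have h6 : (v + u) i = v i + u i := rfl
    rw [h6]
    rw [abs_le] at h5
    constructor
    · linarith [h4.1, h5.1]
    · linarith [h4.2, h5.2]
  have hv2 : v ∈ (box (-2:ℝ) 2 : Set (Euc d)) := fun i =>
    ⟨by linarith [(hv i).1], by linarith [(hv i).2]⟩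
  calc (‖φ ((v + u) + zemb m) - φ (v + zemb m)‖₊ : ℝ≥0∞)
      ≤ (‖φ ((v + u) + zemb m)‖₊ : ℝ≥0∞) + (‖φ (v + zemb m)‖₊ : ℝ≥0∞) := h1
    _ ≤ bsup (-2) 2 (fun x => (‖φ x‖₊ : ℝ≥0∞)) m + bsup (-2) 2 (fun x => (‖φ x‖₊ : ℝ≥0∞)) m :=
        add_le_add (g_le_bsup hvu) (g_le_bsup hv2)
    _ = 2 * bsup (-2) 2 (fun x => (‖φ x‖₊ : ℝ≥0∞)) m := (two_mul _).symm

lemma osum_small (φ : Euc d → ℂ) (hW : MemW01 φ) {e : ℝ} (he : 0 < e) :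
    ∃ γ : ℝ, 0 < γ ∧ γ ≤ 1 ∧ bsum (-1) 1 (oscE φ γ) ≤ ENNReal.ofReal e := by
  classical
  set g : Euc d → ℝ≥0∞ := fun x => (‖φ x‖₊ : ℝ≥0∞) with hg
  set D : (Fin d → ℤ) → ℝ≥0∞ := fun m => 2 * bsup (-2) 2 g m with hD
  have hDsum : ∑' m, D m ≠ ∞ := by
    have h1 : ∑' m, D m = 2 * bsum (-2) 2 g := by
      rw [hD]; exact ENNReal.tsum_mul_left
    rw [h1]
    have h2 := bsum_cover (n₁ := -2) (n₂ := 1) (by norm_num) (a := (-2:ℝ)) (b := 2)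
      (by norm_num) (by norm_num) g
    have h3 := bsum01_le_WNorm φ hW.1
    have h4 : bsum (-2) 2 g < ∞ :=
      lt_of_le_of_lt h2 (ENNReal.mul_lt_top (by simp [lt_top_iff_ne_top])
        (lt_of_le_of_lt h3 hW.2))
    exact (ENNReal.mul_lt_top (by norm_num) h4).ne
  have htail := ENNReal.tendsto_tsum_compl_atTop_zero hDsum
  have he2 : (0:ℝ≥0∞) < ENNReal.ofReal (e/2) := by
    rw [ENNReal.ofReal_pos]; linarith
  obtain ⟨F, hF⟩ := (htail.eventually_lt_const he2).exists
  set base : Set (Euc d) := ⋃ m ∈ F, (fun v : Euc d => v + zemb m) '' (box (-1) 1) with hbase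
  have hbox_cpt : IsCompact (box (-1:ℝ) 1 : Set (Euc d)) := by
    refine Metric.isCompact_of_isClosed_isBounded ?_ ?_
    · have : (box (-1:ℝ) 1 : Set (Euc d)) = ⋂ i, (fun x : Euc d => x i) ⁻¹' Set.Icc (-1:ℝ) 1 := by
        ext x; simp [box]
      rw [this]
      exact isClosed_iInter fun i => isClosed_Icc.preimage ((continuous_apply i).comp (PiLp.continuous_ofLp 2 _))
    · refine Metric.isBounded_iff_subset_closedBall (0:Euc d) |>.2 ⟨Real.sqrt d, fun x hx => ?_⟩
      rw [Metric.mem_closedBall, dist_zero_right]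
      have := norm_le_of_coords (M := 1) one_pos.le x (fun i => by
        have := hx i; rw [abs_le]; exact ⟨this.1, this.2⟩)
      simpa using this
  have hbase_cpt : IsCompact base := by
    rw [hbase]
    refine F.isCompact_biUnion fun m _ => ?_
    exact hbox_cpt.image (continuous_id.add continuous_const)
  set K : Set (Euc d) := Metric.cthickening 1 base with hK
  have hKcpt : IsCompact K := hbase_cpt.cthickening
  have hKuc : UniformContinuousOn φ K := hKcpt.uniformContinuousOn_of_continuous hW.1.continuousOn
  rw [Metric.uniformContinuousOn_iff] at hKuc
  set e2 : ℝ := e / (2 * (F.card + 1)) with he2def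
  have he2pos : 0 < e2 := by positivity
  obtain ⟨δu, hδu, hδuc⟩ := hKuc e2 he2pos
  refine ⟨min (δu/2) 1, lt_min (by linarith) one_pos, min_le_right _ _, ?_⟩
  set γ := min (δu/2) 1 with hγdef
  have hγ1 : γ ≤ 1 := min_le_right _ _
  have hfront : ∀ m ∈ F, bsup (-1) 1 (oscE φ γ) m ≤ ENNReal.ofReal e2 := by
    intro m hm
    refine iSup₂_le fun v hv => iSup₂_le fun u hu => ?_
    rw [Metric.mem_closedBall, dist_zero_right] at hu
    have hz : v + zemb m ∈ K := by
      refine Metric.self_subset_cthickening _ ?_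
      rw [hbase]
      exact Set.mem_biUnion hm ⟨v, hv, rfl⟩
    have hzu : v + zemb m + u ∈ K := by
      rw [hK]
      refine Metric.mem_cthickening_of_dist_le _ (v + zemb m) 1 base ?_ ?_
      · rw [hbase]; exact Set.mem_biUnion hm ⟨v, hv, rfl⟩
      · have hde : dist (v + zemb m + u) (v + zemb m) = ‖u‖ := by
          rw [dist_eq_norm]; congr 1; abel
        rw [hde]
        exact le_trans hu hγ1
    have hdist : dist (v + zemb m + u) (v + zemb m) < δu := by
      have hde : dist (v + zemb m + u) (v + zemb m) = ‖u‖ := by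
        rw [dist_eq_norm]; congr 1; abel
      rw [hde]
      calc ‖u‖ ≤ γ := hu
        _ ≤ δu/2 := min_le_left _ _
        _ < δu := by linarith
    have := hδuc _ hzu _ hz hdist
    rw [dist_eq_norm] at this
    have h7 : (‖φ (v + zemb m + u) - φ (v + zemb m)‖₊ : ℝ≥0∞) ≤ ENNReal.ofReal e2 := by
      rw [← enorm_eq_nnnorm, ← ofReal_norm]
      exact ENNReal.ofReal_le_ofReal this.le
    exact h7
  have hγosc : ∀ m, bsup (-1) 1 (oscE φ γ) m ≤ D m := fun m => bsup_oscE_le hγ1 m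
  have hsplit : bsum (-1) 1 (oscE φ γ) = (∑ m ∈ F, bsup (-1) 1 (oscE φ γ) m)
      + ∑' m : {m // m ∉ F}, bsup (-1) 1 (oscE φ γ) m.val := by
    rw [bsum]
    rw [← Summable.tsum_add_tsum_compl (s := (F : Set (Fin d → ℤ))) ENNReal.summable ENNReal.summable]
    congr 1
    exact F.tsum_subtype _
  rw [hsplit]
  have hfront_tot : (∑ m ∈ F, bsup (-1) 1 (oscE φ γ) m) ≤ ENNReal.ofReal (e/2) := by
    calc ∑ m ∈ F, bsup (-1) 1 (oscE φ γ) m ≤ ∑ _m ∈ F, ENNReal.ofReal e2 :=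
          Finset.sum_le_sum fun m hm => hfront m hm
      _ = (F.card : ℝ≥0∞) * ENNReal.ofReal e2 := by rw [Finset.sum_const, nsmul_eq_mul]
      _ ≤ ENNReal.ofReal (e/2) := by
          have hc : (0:ℝ) ≤ (F.card:ℝ) := Nat.cast_nonneg _
          have h1 : ((F.card : ℕ) : ℝ≥0∞) = ENNReal.ofReal ((F.card : ℕ) : ℝ) :=
            (ENNReal.ofReal_natCast _).symm
          rw [h1, ← ENNReal.ofReal_mul hc]
          refine ENNReal.ofReal_le_ofReal ?_
          have hcp : (0:ℝ) < 2 * ((F.card:ℝ)+1) := by positivity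
          have h2 : ((F.card:ℝ)) * e2 = ((F.card:ℝ)) * e / (2 * ((F.card:ℝ)+1)) := by
            rw [he2def]; ring
          rw [h2, div_le_div_iff₀ hcp (by norm_num : (0:ℝ) < 2)]
          nlinarith
  have htail_tot : ∑' m : {m // m ∉ F}, bsup (-1) 1 (oscE φ γ) m.val ≤ ENNReal.ofReal (e/2) := by
    refine le_trans (ENNReal.tsum_le_tsum fun m => hγosc m.val) hF.le
  calc (∑ m ∈ F, bsup (-1) 1 (oscE φ γ) m) + ∑' m : {m // m ∉ F}, bsup (-1) 1 (oscE φ γ) m.val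
      ≤ ENNReal.ofReal (e/2) + ENNReal.ofReal (e/2) := add_le_add hfront_tot htail_tot
    _ = ENNReal.ofReal e := by
        rw [← ENNReal.ofReal_add (by linarith) (by linarith)]
        norm_num

lemma coord_le_lpNorm {ι : Type*} {p : ℝ≥0∞} (hp : 1 ≤ p) (c : ι → ℂ) (k : ι) :
    (‖c k‖₊ : ℝ≥0∞) ≤ lpNorm p c := by
  unfold _root_.lpNorm
  split_ifs with h
  · exact le_iSup (fun j => (‖c j‖₊ : ℝ≥0∞)) k
  · have hpt0 : 0 < p.toReal := lt_of_lt_of_le one_pos (one_le_toReal hp h)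
    calc (‖c k‖₊ : ℝ≥0∞) = ((‖c k‖₊ : ℝ≥0∞) ^ p.toReal) ^ (1/p.toReal) := by
          rw [← ENNReal.rpow_mul, mul_one_div_cancel hpt0.ne', ENNReal.rpow_one]
      _ ≤ _ := ENNReal.rpow_le_rpow (ENNReal.le_tsum k) (by positivity)

lemma enorm_tsum_le {ι : Type*} [Countable ι] (u : ι → ℂ) :
    (‖∑' k, u k‖₊ : ℝ≥0∞) ≤ ∑' k, (‖u k‖₊ : ℝ≥0∞) := by
  by_cases h : ∑' k, (‖u k‖₊ : ℝ≥0∞) = ∞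
  · rw [h]; exact le_top
  have hsn : Summable (fun k => ‖u k‖₊) := ENNReal.tsum_coe_ne_top_iff_summable.mp h
  have hsnr : Summable (fun k => ‖u k‖) := by
    have := NNReal.summable_coe.2 hsn
    simpa [coe_nnnorm] using this
  have h1 : ‖∑' k, u k‖ ≤ ∑' k, ‖u k‖ := norm_tsum_le_tsum_norm hsnr
  calc (‖∑' k, u k‖₊ : ℝ≥0∞) = ENNReal.ofReal ‖∑' k, u k‖ :=
        (ofReal_norm _).symm
    _ ≤ ENNReal.ofReal (∑' k, ‖u k‖) := ENNReal.ofReal_le_ofReal h1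
    _ = ∑' k, ENNReal.ofReal ‖u k‖ :=
        ENNReal.ofReal_tsum_of_nonneg (fun k => norm_nonneg _) hsnr
    _ = ∑' k, (‖u k‖₊ : ℝ≥0∞) := tsum_congr fun k => ofReal_norm _

section gen

variable {r : ℕ} (Φ : Fin r → Euc d → ℂ) (C : Fin r → (Fin d → ℤ) → ℂ)

lemma S_term_bound (x : Euc d) (k : Fin d → ℤ) :
    (‖∑ i, C i k * Φ i (x - zemb k)‖₊ : ℝ≥0∞)
      ≤ ∑ i, (‖C i k‖₊ : ℝ≥0∞) * (‖Φ i (x - zemb k)‖₊ : ℝ≥0∞) := by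
  calc (‖∑ i, C i k * Φ i (x - zemb k)‖₊ : ℝ≥0∞)
      ≤ ∑ i, (‖C i k * Φ i (x - zemb k)‖₊ : ℝ≥0∞) := by
        exact_mod_cast nnnorm_sum_le Finset.univ (fun i => C i k * Φ i (x - zemb k))
    _ = ∑ i, (‖C i k‖₊ : ℝ≥0∞) * (‖Φ i (x - zemb k)‖₊ : ℝ≥0∞) := by
        refine Finset.sum_congr rfl fun i _ => ?_
        rw [nnnorm_mul]; push_cast; ring

lemma tsum_nnnorm_S_le {p : ℝ≥0∞} (hp : 1 ≤ p) (x : Euc d) :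
    ∑' k : Fin d → ℤ, (‖∑ i, C i k * Φ i (x - zemb k)‖₊ : ℝ≥0∞)
      ≤ ∑ i, lpNorm p (C i) * bsum 0 1 (fun y => (‖Φ i y‖₊ : ℝ≥0∞)) := by
  calc ∑' k : Fin d → ℤ, (‖∑ i, C i k * Φ i (x - zemb k)‖₊ : ℝ≥0∞)
      ≤ ∑' k : Fin d → ℤ, ∑ i, (‖C i k‖₊ : ℝ≥0∞) * (‖Φ i (x - zemb k)‖₊ : ℝ≥0∞) :=
        ENNReal.tsum_le_tsum (S_term_bound Φ C x)
    _ = ∑ i, ∑' k : Fin d → ℤ, (‖C i k‖₊ : ℝ≥0∞) * (‖Φ i (x - zemb k)‖₊ : ℝ≥0∞) :=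
        Summable.tsum_finsetSum fun i _ => ENNReal.summable
    _ ≤ ∑ i, ∑' k : Fin d → ℤ, lpNorm p (C i) * (‖Φ i (x - zemb k)‖₊ : ℝ≥0∞) :=
        Finset.sum_le_sum fun i _ => ENNReal.tsum_le_tsum fun k =>
          mul_le_mul_left (coord_le_lpNorm hp (C i) k) _
    _ = ∑ i, lpNorm p (C i) * ∑' k : Fin d → ℤ, (‖Φ i (x - zemb k)‖₊ : ℝ≥0∞) := by
        refine Finset.sum_congr rfl fun i _ => ?_
        exact ENNReal.tsum_mul_left
    _ ≤ ∑ i, lpNorm p (C i) * bsum 0 1 (fun y => (‖Φ i y‖₊ : ℝ≥0∞)) :=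
        Finset.sum_le_sum fun i _ => mul_le_mul_right
          (row_le (fun y => (‖Φ i y‖₊ : ℝ≥0∞)) x) _

lemma summable_S {p : ℝ≥0∞} (hp : 1 ≤ p)
    (hfin : ∑ i, lpNorm p (C i) * bsum 0 1 (fun y => (‖Φ i y‖₊ : ℝ≥0∞)) ≠ ∞) (x : Euc d) :
    Summable (fun k : Fin d → ℤ => ∑ i, C i k * Φ i (x - zemb k)) := by
  have h1 : ∑' k : Fin d → ℤ, (‖∑ i, C i k * Φ i (x - zemb k)‖₊ : ℝ≥0∞) ≠ ∞ :=
    ne_top_of_le_ne_top hfin (tsum_nnnorm_S_le Φ C hp x)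
  exact Summable.of_nnnorm (ENNReal.tsum_coe_ne_top_iff_summable.mp h1)

lemma genFun_bound {p : ℝ≥0∞} (hp : 1 ≤ p) (x : Euc d) :
    (‖genFun Φ C x‖₊ : ℝ≥0∞) ≤ ∑ i, lpNorm p (C i) * bsum 0 1 (fun y => (‖Φ i y‖₊ : ℝ≥0∞)) :=
  le_trans (enorm_tsum_le _) (tsum_nnnorm_S_le Φ C hp x)

lemma genFun_shift_bound {p : ℝ≥0∞} (hp : 1 ≤ p)
    (hfin : ∑ i, lpNorm p (C i) * bsum 0 1 (fun y => (‖Φ i y‖₊ : ℝ≥0∞)) ≠ ∞)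
    {γ : ℝ} {Δ : Euc d} (hΔ : ‖Δ‖ ≤ γ) (z : Euc d) :
    (‖genFun Φ C (z + Δ) - genFun Φ C z‖₊ : ℝ≥0∞)
      ≤ ∑' ik : Fin r × (Fin d → ℤ),
          (‖C ik.1 ik.2‖₊ : ℝ≥0∞) * oscE (Φ ik.1) γ (z - zemb ik.2) := by
  have hs1 := summable_S Φ C hp hfin (z + Δ)
  have hs2 := summable_S Φ C hp hfin z
  have hrw : genFun Φ C (z + Δ) - genFun Φ C z
      = ∑' k : Fin d → ℤ, ((∑ i, C i k * Φ i (z + Δ - zemb k)) -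
          (∑ i, C i k * Φ i (z - zemb k))) := (Summable.tsum_sub hs1 hs2).symm
  rw [hrw]
  refine le_trans (enorm_tsum_le _) ?_
  have hterm : ∀ k : Fin d → ℤ,
      (‖(∑ i, C i k * Φ i (z + Δ - zemb k)) - (∑ i, C i k * Φ i (z - zemb k))‖₊ : ℝ≥0∞)
        ≤ ∑ i, (‖C i k‖₊ : ℝ≥0∞) * oscE (Φ i) γ (z - zemb k) := by
    intro k
    have h1 : (∑ i, C i k * Φ i (z + Δ - zemb k)) - (∑ i, C i k * Φ i (z - zemb k))
        = ∑ i, C i k * (Φ i (z + Δ - zemb k) - Φ i (z - zemb k)) := by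
      rw [← Finset.sum_sub_distrib]
      exact Finset.sum_congr rfl fun i _ => (mul_sub _ _ _).symm
    rw [h1]
    calc (‖∑ i, C i k * (Φ i (z + Δ - zemb k) - Φ i (z - zemb k))‖₊ : ℝ≥0∞)
        ≤ ∑ i, (‖C i k‖₊ : ℝ≥0∞) * (‖Φ i (z + Δ - zemb k) - Φ i (z - zemb k)‖₊ : ℝ≥0∞) := by
          calc (‖∑ i, C i k * (Φ i (z + Δ - zemb k) - Φ i (z - zemb k))‖₊ : ℝ≥0∞)
              ≤ ∑ i, (‖C i k * (Φ i (z + Δ - zemb k) - Φ i (z - zemb k))‖₊ : ℝ≥0∞) := by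
                exact_mod_cast nnnorm_sum_le Finset.univ _
            _ = ∑ i, (‖C i k‖₊ : ℝ≥0∞) * (‖Φ i (z + Δ - zemb k) - Φ i (z - zemb k)‖₊ : ℝ≥0∞) := by
                refine Finset.sum_congr rfl fun i _ => ?_
                rw [nnnorm_mul]; push_cast; ring
      _ ≤ ∑ i, (‖C i k‖₊ : ℝ≥0∞) * oscE (Φ i) γ (z - zemb k) := by
          refine Finset.sum_le_sum fun i _ => mul_le_mul_right ?_ _
          have h2 : z + Δ - zemb k = (z - zemb k) + Δ := by abel
          rw [h2]
          exact oscE_le hΔ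
  refine le_trans (ENNReal.tsum_le_tsum hterm) (le_of_eq ?_)
  rw [ENNReal.tsum_prod (f := fun i k => (‖C i k‖₊ : ℝ≥0∞) * oscE (Φ i) γ (z - zemb k))]
  rw [show (∑' (i : Fin r), ∑' k : Fin d → ℤ, (‖C i k‖₊ : ℝ≥0∞) * oscE (Φ i) γ (z - zemb k))
      = ∑ i, ∑' k : Fin d → ℤ, (‖C i k‖₊ : ℝ≥0∞) * oscE (Φ i) γ (z - zemb k) from tsum_fintype _]
  exact Summable.tsum_finsetSum fun i _ => ENNReal.summable

lemma measurable_genFun (hΦc : ∀ i, Continuous (Φ i))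
    (hsum : ∀ x : Euc d, Summable (fun k : Fin d → ℤ => ∑ i, C i k * Φ i (x - zemb k))) :
    Measurable (genFun Φ C) := by
  classical
  letI : Encodable (Fin d → ℤ) := Encodable.ofCountable _
  have hFn : ∀ n : ℕ, ((Encodable.encode) ⁻¹' (Set.Iic n) : Set (Fin d → ℤ)).Finite :=
    fun n => Set.Finite.preimage
      (Set.injOn_of_injective Encodable.encode_injective) (Set.finite_Iic n)
  have hmono : Monotone (fun n : ℕ => (hFn n).toFinset) := by
    intro a b hab k hk
    simp only [Set.Finite.mem_toFinset, Set.mem_preimage, Set.mem_Iic] at hk ⊢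
    exact le_trans hk hab
  have hexh : ∀ k : Fin d → ℤ, ∃ n, k ∈ (hFn n).toFinset := fun k =>
    ⟨Encodable.encode k, by
      simp only [Set.Finite.mem_toFinset, Set.mem_preimage, Set.mem_Iic]
      exact le_refl _⟩
  have htendF : Filter.Tendsto (fun n : ℕ => (hFn n).toFinset) Filter.atTop Filter.atTop :=
    hmono.tendsto_atTop_finset hexh
  set Fn : ℕ → Finset (Fin d → ℤ) := fun n => (hFn n).toFinset
  have hconts : ∀ n, Continuous (fun x : Euc d => ∑ k ∈ Fn n, ∑ i, C i k * Φ i (x - zemb k)) :=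
    fun n => continuous_finset_sum _ fun k _ => continuous_finset_sum _ fun i _ =>
      continuous_const.mul ((hΦc i).comp (continuous_id.sub continuous_const))
  refine measurable_of_tendsto_metrizable (fun n => (hconts n).measurable) ?_
  rw [tendsto_pi_nhds]
  intro x
  exact ((hsum x).hasSum.comp htendF : _)

end gen

def jparts (μ : ComplexMeasure (Euc d)) : Measure (Euc d) :=
  (ComplexMeasure.re μ).toJordanDecomposition.posPart +
  (ComplexMeasure.re μ).toJordanDecomposition.negPart +
  (ComplexMeasure.im μ).toJordanDecomposition.posPart +
  (ComplexMeasure.im μ).toJordanDecomposition.negPart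

instance jparts_finite (μ : ComplexMeasure (Euc d)) : IsFiniteMeasure (jparts μ) := by
  unfold jparts; infer_instance

lemma part_le_jparts₁ (μ : ComplexMeasure (Euc d)) :
    (ComplexMeasure.re μ).toJordanDecomposition.posPart ≤ jparts μ := by
  unfold jparts
  calc (ComplexMeasure.re μ).toJordanDecomposition.posPart
      ≤ _ + (ComplexMeasure.re μ).toJordanDecomposition.negPart := Measure.le_add_right le_rfl
    _ ≤ _ + (ComplexMeasure.im μ).toJordanDecomposition.posPart := Measure.le_add_right le_rfl
    _ ≤ _ + (ComplexMeasure.im μ).toJordanDecomposition.negPart := Measure.le_add_right le_rfl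

lemma part_le_jparts₂ (μ : ComplexMeasure (Euc d)) :
    (ComplexMeasure.re μ).toJordanDecomposition.negPart ≤ jparts μ := by
  unfold jparts
  calc (ComplexMeasure.re μ).toJordanDecomposition.negPart
      ≤ (ComplexMeasure.re μ).toJordanDecomposition.posPart + _ := Measure.le_add_left le_rfl
    _ ≤ _ + (ComplexMeasure.im μ).toJordanDecomposition.posPart := Measure.le_add_right le_rfl
    _ ≤ _ + (ComplexMeasure.im μ).toJordanDecomposition.negPart := Measure.le_add_right le_rfl

lemma part_le_jparts₃ (μ : ComplexMeasure (Euc d)) :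
    (ComplexMeasure.im μ).toJordanDecomposition.posPart ≤ jparts μ := by
  unfold jparts
  calc (ComplexMeasure.im μ).toJordanDecomposition.posPart
      ≤ _ + (ComplexMeasure.im μ).toJordanDecomposition.posPart := Measure.le_add_left le_rfl
    _ ≤ _ + (ComplexMeasure.im μ).toJordanDecomposition.negPart := Measure.le_add_right le_rfl

lemma part_le_jparts₄ (μ : ComplexMeasure (Euc d)) :
    (ComplexMeasure.im μ).toJordanDecomposition.negPart ≤ jparts μ := by
  unfold jparts
  exact Measure.le_add_left le_rfl

lemma cInt_diff_le (μ : ComplexMeasure (Euc d)) (g h : Euc d → ℂ)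
    (hg : Integrable g (jparts μ)) (hh : Integrable h (jparts μ)) :
    (‖cInt μ g - cInt μ h‖₊ : ℝ≥0∞) ≤ ∫⁻ y, (‖g y - h y‖₊ : ℝ≥0∞) ∂(jparts μ) := by
  set ν₁ := (ComplexMeasure.re μ).toJordanDecomposition.posPart
  set ν₂ := (ComplexMeasure.re μ).toJordanDecomposition.negPart
  set ν₃ := (ComplexMeasure.im μ).toJordanDecomposition.posPart
  set ν₄ := (ComplexMeasure.im μ).toJordanDecomposition.negPart
  have hg₁ : Integrable g ν₁ := hg.mono_measure (part_le_jparts₁ μ)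
  have hg₂ : Integrable g ν₂ := hg.mono_measure (part_le_jparts₂ μ)
  have hg₃ : Integrable g ν₃ := hg.mono_measure (part_le_jparts₃ μ)
  have hg₄ : Integrable g ν₄ := hg.mono_measure (part_le_jparts₄ μ)
  have hh₁ : Integrable h ν₁ := hh.mono_measure (part_le_jparts₁ μ)
  have hh₂ : Integrable h ν₂ := hh.mono_measure (part_le_jparts₂ μ)
  have hh₃ : Integrable h ν₃ := hh.mono_measure (part_le_jparts₃ μ)
  have hh₄ : Integrable h ν₄ := hh.mono_measure (part_le_jparts₄ μ)
  have hkey : ∀ (ν : Measure (Euc d)), Integrable g ν → Integrable h ν →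
      (‖(∫ x, g x ∂ν) - ∫ x, h x ∂ν‖₊ : ℝ≥0∞) ≤ ∫⁻ y, (‖g y - h y‖₊ : ℝ≥0∞) ∂ν := by
    intro ν h1 h2
    rw [← integral_sub h1 h2]
    exact enorm_integral_le_lintegral_enorm _
  have hnorm : ‖cInt μ g - cInt μ h‖
      ≤ ‖(∫ x, g x ∂ν₁) - ∫ x, h x ∂ν₁‖ + ‖(∫ x, g x ∂ν₂) - ∫ x, h x ∂ν₂‖
        + (‖(∫ x, g x ∂ν₃) - ∫ x, h x ∂ν₃‖ + ‖(∫ x, g x ∂ν₄) - ∫ x, h x ∂ν₄‖) := by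
    have hrw : cInt μ g - cInt μ h
        = (((∫ x, g x ∂ν₁) - ∫ x, h x ∂ν₁) - ((∫ x, g x ∂ν₂) - ∫ x, h x ∂ν₂))
          + Complex.I * (((∫ x, g x ∂ν₃) - ∫ x, h x ∂ν₃)
            - ((∫ x, g x ∂ν₄) - ∫ x, h x ∂ν₄)) := by
      unfold cInt; ring
    rw [hrw]
    refine le_trans (norm_add_le _ _) ?_
    have h3 : ‖Complex.I * (((∫ x, g x ∂ν₃) - ∫ x, h x ∂ν₃)
        - ((∫ x, g x ∂ν₄) - ∫ x, h x ∂ν₄))‖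
        = ‖(((∫ x, g x ∂ν₃) - ∫ x, h x ∂ν₃) - ((∫ x, g x ∂ν₄) - ∫ x, h x ∂ν₄))‖ := by
      rw [norm_mul, Complex.norm_I, one_mul]
    rw [h3]
    exact add_le_add (norm_sub_le _ _) (norm_sub_le _ _)
  calc (‖cInt μ g - cInt μ h‖₊ : ℝ≥0∞)
      = ENNReal.ofReal ‖cInt μ g - cInt μ h‖ := (ofReal_norm _).symm
    _ ≤ ENNReal.ofReal (‖(∫ x, g x ∂ν₁) - ∫ x, h x ∂ν₁‖ + ‖(∫ x, g x ∂ν₂) - ∫ x, h x ∂ν₂‖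
        + (‖(∫ x, g x ∂ν₃) - ∫ x, h x ∂ν₃‖ + ‖(∫ x, g x ∂ν₄) - ∫ x, h x ∂ν₄‖)) :=
        ENNReal.ofReal_le_ofReal hnorm
    _ ≤ ((‖(∫ x, g x ∂ν₁) - ∫ x, h x ∂ν₁‖₊ : ℝ≥0∞) + (‖(∫ x, g x ∂ν₂) - ∫ x, h x ∂ν₂‖₊ : ℝ≥0∞))
        + ((‖(∫ x, g x ∂ν₃) - ∫ x, h x ∂ν₃‖₊ : ℝ≥0∞)
          + (‖(∫ x, g x ∂ν₄) - ∫ x, h x ∂ν₄‖₊ : ℝ≥0∞)) := by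
        refine le_trans (ENNReal.ofReal_add_le) ?_
        refine add_le_add (le_trans ENNReal.ofReal_add_le ?_) (le_trans ENNReal.ofReal_add_le ?_)
        · exact add_le_add (le_of_eq (ofReal_norm _))
            (le_of_eq (ofReal_norm _))
        · exact add_le_add (le_of_eq (ofReal_norm _))
            (le_of_eq (ofReal_norm _))
    _ ≤ ((∫⁻ y, (‖g y - h y‖₊ : ℝ≥0∞) ∂ν₁) + (∫⁻ y, (‖g y - h y‖₊ : ℝ≥0∞) ∂ν₂))
        + ((∫⁻ y, (‖g y - h y‖₊ : ℝ≥0∞) ∂ν₃) + (∫⁻ y, (‖g y - h y‖₊ : ℝ≥0∞) ∂ν₄)) := by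
        exact add_le_add (add_le_add (hkey ν₁ hg₁ hh₁) (hkey ν₂ hg₂ hh₂))
          (add_le_add (hkey ν₃ hg₃ hh₃) (hkey ν₄ hg₄ hh₄))
    _ = ∫⁻ y, (‖g y - h y‖₊ : ℝ≥0∞) ∂(jparts μ) := by
        unfold jparts
        rw [lintegral_add_measure, lintegral_add_measure, lintegral_add_measure]
        ring

lemma bsum_T_le (θ : Measure (Euc d)) [IsFiniteMeasure θ] (osc : Euc d → ℝ≥0∞) :
    bsum 0 1 (fun w => ∫⁻ y, osc (w - y) ∂θ) ≤ θ Set.univ * bsum (-1) 1 osc := by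
  have hpt : ∀ (m : Fin d → ℤ) (v : Euc d), v ∈ (box (0:ℝ) 1 : Set (Euc d)) → ∀ y : Euc d,
      osc (v + zemb m - y) ≤ bsup (-1) 1 osc (m - flo y) := by
    intro m v hv y
    have h1 : v + zemb m - y = (v - (y - zemb (flo y))) + zemb (m - flo y) := by
      rw [zemb_sub]; abel
    rw [h1]
    refine g_le_bsup ?_
    intro i
    have h2 := mem_box01_fract y i
    have h3 := hv i
    have h4 : (v - (y - zemb (flo y))) i = v i - (y - zemb (flo y)) i := rfl
    rw [h4]
    constructor
    · linarith [h2.2, h3.1]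
    · linarith [h2.1, h3.2]
  have hsup : ∀ m : Fin d → ℤ, bsup 0 1 (fun w => ∫⁻ y, osc (w - y) ∂θ) m
      ≤ ∫⁻ y, bsup (-1) 1 osc (m - flo y) ∂θ := by
    intro m
    refine iSup₂_le fun v hv => ?_
    exact lintegral_mono fun y => hpt m v hv y
  calc bsum 0 1 (fun w => ∫⁻ y, osc (w - y) ∂θ)
      ≤ ∑' m : Fin d → ℤ, ∫⁻ y, bsup (-1) 1 osc (m - flo y) ∂θ :=
        ENNReal.tsum_le_tsum hsup
    _ = ∫⁻ y, ∑' m : Fin d → ℤ, bsup (-1) 1 osc (m - flo y) ∂θ := by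
        refine (lintegral_tsum fun m => ?_).symm
        refine Measurable.aemeasurable ?_
        exact (measurable_of_countable (fun n : Fin d → ℤ => bsup (-1) 1 osc n)).comp
          ((measurable_const.sub measurable_flo))
    _ = ∫⁻ _y, bsum (-1) 1 osc ∂θ := by
        refine lintegral_congr fun y => ?_
        exact (Equiv.subRight (flo y)).tsum_eq (bsup (-1) 1 osc)
    _ = θ Set.univ * bsum (-1) 1 osc := by
        rw [lintegral_const]
        ring

end JJ

end

end JJAux

open MeasureTheory ENNReal in
/-- Lemma 5.1: the sampling operator depends continuously on jitter:
`‖U - U_Δ‖ → 0` as `sup_j |δ_j| → 0`. -/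
theorem sampling_operator_jitter_continuity
    (d r t : ℕ) (p : ℝ≥0∞) (hp : 1 ≤ p) (J : Type) [Countable J]
    (Φ : Fin r → Euc d → ℂ) (hΦ : ∀ i, MemW01 (Φ i))
    (μ : Fin t → ComplexMeasure (Euc d))
    (X : J → Euc d) (hsep : SeparatedSet X) :
    ∀ ε : ℝ, 0 < ε → ∃ γ : ℝ, 0 < γ ∧
      ∀ Δ : J → Euc d, (⨆ j : J, (‖Δ j‖₊ : ℝ≥0∞)) < ENNReal.ofReal γ →
        ∀ C : Fin r → (Fin d → ℤ) → ℂ, vlpNorm p C < ∞ →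
          ∑ l, lpNorm p (fun j =>
              mconv (μ l) (genFun Φ C) (X j) - mconv (μ l) (genFun Φ C) (X j + Δ j)) ≤
            ENNReal.ofReal ε * vlpNorm p C := by
  classical
  obtain ⟨δ₀, hδ0, hsepw⟩ := hsep
  obtain ⟨N, hN⟩ := JJ.count_bound (X := X) hδ0 hsepw
  intro ε hε
  have hbsum_fin : ∀ i, JJ.bsum 0 1 (fun y => (‖Φ i y‖₊ : ℝ≥0∞)) < ∞ := fun i =>
    lt_of_le_of_lt (JJ.bsum01_le_WNorm (Φ i) (hΦ i).1) (hΦ i).2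
  set TM : ℝ≥0∞ := ∑ l, (JJ.jparts (μ l)) Set.univ with hTM
  have hTMfin : TM ≠ ∞ := by
    rw [hTM]
    exact (ENNReal.sum_lt_top.mpr fun l _ => measure_lt_top _ _).ne
  have hTMr : 0 ≤ TM.toReal := ENNReal.toReal_nonneg
  set e : ℝ := ε / (((N:ℝ) + 1) * (TM.toReal + 1) * ((r:ℝ) + 1)) with he_def
  have he : 0 < e := by rw [he_def]; positivity
  choose γf hγf0 hγf1 hγfb using fun i : Fin r => JJ.osum_small (Φ i) (hΦ i) he
  set G : Option (Fin r) → ℝ := fun o => o.elim 1 γf with hG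
  have hne : (Finset.univ : Finset (Option (Fin r))).Nonempty := ⟨none, Finset.mem_univ _⟩
  set γ : ℝ := Finset.univ.inf' hne G with hγdef
  have hγ0 : 0 < γ := by
    rw [hγdef, Finset.lt_inf'_iff]
    intro o _
    cases o with
    | none => exact one_pos
    | some i => exact hγf0 i
  have hγle : ∀ i, γ ≤ γf i := fun i => Finset.inf'_le G (Finset.mem_univ (some i))
  refine ⟨γ, hγ0, ?_⟩
  intro Δ hΔ C hC
  have hΔle : ∀ j, ‖Δ j‖ ≤ γ := by
    intro j
    have h1 : (‖Δ j‖₊ : ℝ≥0∞) < ENNReal.ofReal γ :=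
      lt_of_le_of_lt (le_iSup (fun j => (‖Δ j‖₊ : ℝ≥0∞)) j) hΔ
    rw [← enorm_eq_nnnorm, ← ofReal_norm] at h1
    exact ((ENNReal.ofReal_lt_ofReal_iff hγ0).mp h1).le
  have hlp_fin : ∀ i, lpNorm p (C i) ≠ ∞ := by
    intro i
    have h1 : lpNorm p (C i) ≤ vlpNorm p C :=
      Finset.single_le_sum (f := fun i => lpNorm p (C i)) (fun _ _ => zero_le)
        (Finset.mem_univ i)
    exact (lt_of_le_of_lt h1 hC).ne
  have hBfin : ∑ i, lpNorm p (C i) * JJ.bsum 0 1 (fun y => (‖Φ i y‖₊ : ℝ≥0∞)) ≠ ∞ := by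
    refine (ENNReal.sum_lt_top.mpr fun i _ => ?_).ne
    exact ENNReal.mul_lt_top (lt_top_iff_ne_top.mpr (hlp_fin i)) (hbsum_fin i)
  have hsum := JJ.summable_S Φ C hp hBfin
  have hfm : Measurable (genFun Φ C) := JJ.measurable_genFun Φ C (fun i => (hΦ i).1) hsum
  have hInt : ∀ (l : Fin t) (x : Euc d),
      Integrable (fun y => genFun Φ C (x - y)) (JJ.jparts (μ l)) := by
    intro l x
    refine ⟨(hfm.comp (measurable_const.sub measurable_id)).aestronglyMeasurable, ?_⟩
    refine lt_of_le_of_lt (lintegral_mono fun y => JJ.genFun_bound Φ C hp (x - y)) ?_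
    rw [lintegral_const]
    exact ENNReal.mul_lt_top (lt_top_iff_ne_top.mpr hBfin) (measure_lt_top _ _)
  set osum : Fin r → ℝ≥0∞ := fun i => JJ.bsum (-1) 1 (JJ.oscE (Φ i) γ) with hosum
  have hosum_le : ∀ i, osum i ≤ ENNReal.ofReal e := fun i =>
    le_trans (JJ.bsum_mono le_rfl le_rfl (fun z => JJ.oscE_mono (Φ i) (hγle i) z)) (hγfb i)
  set mass : Fin t → ℝ≥0∞ := fun l => (JJ.jparts (μ l)) Set.univ with hmass
  set T : Fin t → Fin r → Euc d → ℝ≥0∞ :=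
    fun l i w => ∫⁻ y, JJ.oscE (Φ i) γ (w - y) ∂(JJ.jparts (μ l)) with hT
  have hTbsum : ∀ l i, JJ.bsum 0 1 (T l i) ≤ mass l * osum i := fun l i =>
    JJ.bsum_T_le (JJ.jparts (μ l)) (JJ.oscE (Φ i) γ)
  set Nb : ℝ≥0∞ := max (N : ℝ≥0∞) 1 with hNb
  set Rl : Fin t → ℝ≥0∞ := fun l => Nb * (mass l * ∑ i, osum i) with hRl
  set a : Fin r × (Fin d → ℤ) → ℝ≥0∞ := fun ik => (‖C ik.1 ik.2‖₊ : ℝ≥0∞) with ha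
  set K : Fin t → J → (Fin r × (Fin d → ℤ)) → ℝ≥0∞ :=
    fun l j ik => T l ik.1 (X j - zemb ik.2) with hK
  have hrow : ∀ l j, ∑' ik : Fin r × (Fin d → ℤ), K l j ik ≤ Rl l := by
    intro l j
    have h1 : ∑' ik : Fin r × (Fin d → ℤ), K l j ik
        = ∑ i, ∑' k : Fin d → ℤ, T l i (X j - zemb k) := by
      rw [ENNReal.tsum_prod (f := fun i k => T l i (X j - zemb k))]
      exact tsum_fintype _
    rw [h1]
    calc ∑ i, ∑' k : Fin d → ℤ, T l i (X j - zemb k) ≤ ∑ i, JJ.bsum 0 1 (T l i) :=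
          Finset.sum_le_sum fun i _ => JJ.row_le (T l i) (X j)
      _ ≤ ∑ i, mass l * osum i := Finset.sum_le_sum fun i _ => hTbsum l i
      _ = mass l * ∑ i, osum i := by rw [Finset.mul_sum]
      _ ≤ Rl l := le_mul_of_one_le_left zero_le (le_max_right _ _)
  have hcol : ∀ l (ik : Fin r × (Fin d → ℤ)), ∑' j : J, K l j ik ≤ Rl l := by
    intro l ik
    calc ∑' j : J, T l ik.1 (X j - zemb ik.2) ≤ (N : ℝ≥0∞) * JJ.bsum 0 1 (T l ik.1) :=
          JJ.col_le hN (T l ik.1) ik.2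
      _ ≤ Nb * (mass l * osum ik.1) := mul_le_mul' (le_max_left _ _) (hTbsum l ik.1)
      _ ≤ Rl l := by
          refine mul_le_mul_right (mul_le_mul_right ?_ _) _
          exact Finset.single_le_sum (f := osum) (fun _ _ => zero_le) (Finset.mem_univ ik.1)
  have hpoint : ∀ (l : Fin t) (j : J),
      (‖mconv (μ l) (genFun Φ C) (X j) - mconv (μ l) (genFun Φ C) (X j + Δ j)‖₊ : ℝ≥0∞)
        ≤ ∑' ik : Fin r × (Fin d → ℤ), a ik * K l j ik := by
    intro l j
    have h1 : (‖mconv (μ l) (genFun Φ C) (X j) - mconv (μ l) (genFun Φ C) (X j + Δ j)‖₊ : ℝ≥0∞)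
        ≤ ∫⁻ y, (‖genFun Φ C (X j - y) - genFun Φ C (X j + Δ j - y)‖₊ : ℝ≥0∞)
            ∂(JJ.jparts (μ l)) :=
      JJ.cInt_diff_le (μ l) _ _ (hInt l (X j)) (hInt l (X j + Δ j))
    refine le_trans h1 ?_
    have h2 : ∀ y : Euc d, (‖genFun Φ C (X j - y) - genFun Φ C (X j + Δ j - y)‖₊ : ℝ≥0∞)
        ≤ ∑' ik : Fin r × (Fin d → ℤ),
            a ik * JJ.oscE (Φ ik.1) γ ((X j - zemb ik.2) - y) := by
      intro y
      have h3 : genFun Φ C (X j - y) - genFun Φ C (X j + Δ j - y)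
          = -(genFun Φ C ((X j - y) + Δ j) - genFun Φ C (X j - y)) := by
        rw [show X j + Δ j - y = (X j - y) + Δ j from by abel]; ring
      rw [h3, nnnorm_neg]
      refine le_trans (JJ.genFun_shift_bound Φ C hp hBfin (hΔle j) (X j - y)) ?_
      refine le_of_eq (tsum_congr fun ik => ?_)
      rw [show (X j - y) - zemb ik.2 = (X j - zemb ik.2) - y from by abel]
    refine le_trans (lintegral_mono h2) ?_
    have hmeas : ∀ ik : Fin r × (Fin d → ℤ),
        Measurable (fun y : Euc d => JJ.oscE (Φ ik.1) γ ((X j - zemb ik.2) - y)) := fun ik =>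
      (JJ.measurable_oscE (Φ ik.1) (hΦ ik.1).1 γ).comp (measurable_const.sub measurable_id)
    have h4 := lintegral_tsum (μ := JJ.jparts (μ l))
      (f := fun (ik : Fin r × (Fin d → ℤ)) (y : Euc d) =>
        a ik * JJ.oscE (Φ ik.1) γ ((X j - zemb ik.2) - y))
      (fun ik => (measurable_const.mul (hmeas ik)).aemeasurable)
    rw [h4]
    refine le_of_eq (tsum_congr fun ik => ?_)
    rw [lintegral_const_mul _ (hmeas ik)]
  have hl : ∀ l : Fin t, lpNorm p (fun j => mconv (μ l) (genFun Φ C) (X j)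
      - mconv (μ l) (genFun Φ C) (X j + Δ j)) ≤ Rl l * vlpNorm p C := by
    intro l
    have h1 : lpNorm p (fun j => mconv (μ l) (genFun Φ C) (X j)
        - mconv (μ l) (genFun Φ C) (X j + Δ j))
        = JJ.elp p (fun j => (‖mconv (μ l) (genFun Φ C) (X j)
          - mconv (μ l) (genFun Φ C) (X j + Δ j)‖₊ : ℝ≥0∞)) := rfl
    rw [h1]
    refine le_trans (JJ.elp_mono p (hpoint l)) ?_
    refine le_trans (JJ.schur hp (K l) a (Rl l) (hrow l) (hcol l)) ?_
    refine mul_le_mul_right ?_ _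
    exact le_trans (JJ.elp_prod_le hp a) (le_of_eq rfl)
  have hRsum : ∑ l, Rl l ≤ ENNReal.ofReal ε := by
    have h1 : ∑ l, Rl l = Nb * TM * ∑ i, osum i := by
      rw [hTM]
      rw [show (∑ l, Rl l) = ∑ l, Nb * (mass l * ∑ i, osum i) from rfl]
      rw [← Finset.mul_sum]
      rw [show (∑ l, mass l * ∑ i, osum i) = (∑ l, mass l) * ∑ i, osum i from
        (Finset.sum_mul _ _ _).symm]
      rw [mul_assoc]
    rw [h1]
    have hNb_le : Nb ≤ ENNReal.ofReal ((N:ℝ) + 1) := by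
      have h2 : ENNReal.ofReal ((N:ℝ) + 1) = (N : ℝ≥0∞) + 1 := by
        rw [ENNReal.ofReal_add (Nat.cast_nonneg _) zero_le_one, ENNReal.ofReal_natCast,
          ENNReal.ofReal_one]
      rw [h2]
      exact max_le le_self_add le_add_self
    have hTM_le : TM ≤ ENNReal.ofReal (TM.toReal + 1) := by
      refine le_trans (le_of_eq (ENNReal.ofReal_toReal hTMfin).symm) ?_
      exact ENNReal.ofReal_le_ofReal (by linarith)
    have hO_le : ∑ i, osum i ≤ ENNReal.ofReal (((r:ℝ) + 1) * e) := by
      calc ∑ i, osum i ≤ ∑ _i : Fin r, ENNReal.ofReal e :=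
            Finset.sum_le_sum fun i _ => hosum_le i
        _ = ((r:ℕ) : ℝ≥0∞) * ENNReal.ofReal e := by
            rw [Finset.sum_const, Finset.card_univ, Fintype.card_fin, nsmul_eq_mul]
        _ = ENNReal.ofReal ((r:ℝ) * e) := by
            rw [ENNReal.ofReal_mul (Nat.cast_nonneg _), ENNReal.ofReal_natCast]
        _ ≤ ENNReal.ofReal (((r:ℝ) + 1) * e) := by
            refine ENNReal.ofReal_le_ofReal ?_
            nlinarith [he.le, Nat.cast_nonneg (α := ℝ) r]
    calc Nb * TM * ∑ i, osum i
        ≤ ENNReal.ofReal ((N:ℝ) + 1) * ENNReal.ofReal (TM.toReal + 1)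
          * ENNReal.ofReal (((r:ℝ) + 1) * e) :=
          mul_le_mul' (mul_le_mul' hNb_le hTM_le) hO_le
      _ = ENNReal.ofReal (((N:ℝ) + 1) * (TM.toReal + 1) * (((r:ℝ) + 1) * e)) := by
          rw [← ENNReal.ofReal_mul (by positivity), ← ENNReal.ofReal_mul (by positivity)]
      _ = ENNReal.ofReal ε := by
          congr 1
          rw [he_def]
          field_simp
  calc ∑ l, lpNorm p (fun j => mconv (μ l) (genFun Φ C) (X j)
        - mconv (μ l) (genFun Φ C) (X j + Δ j))
      ≤ ∑ l, Rl l * vlpNorm p C := Finset.sum_le_sum fun l _ => hl l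
    _ = (∑ l, Rl l) * vlpNorm p C := (Finset.sum_mul _ _ _).symm
    _ ≤ ENNReal.ofReal ε * vlpNorm p C := mul_le_mul_left hRsum _
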